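/- Let X be a Banach space such that the canonical image of X in its bidual X** is complemented in X**. Then for any free ultrafilter U on ℕ, the canonical (diagonal) copy of X in the ultrapower X^U is complemented in X^U. -/

import Mathlib

open Filter

variable {X : Type*} [NormedAddCommGroup X] [NormedSpace ℝ X]

/-- The null subspace `N_U = {(x_n) ∈ ℓ_∞(X) : lim_U ‖x_n‖ = 0}`. -/
noncomputable def BWNull (X : Type*) [NormedAddCommGroup X] [NormedSpace ℝ X]
    (U : Ultrafilter ℕ) : Submodule ℝ (lp (fun _ : ℕ => X) ⊤) where
  carrier := {f | Tendsto (fun n => ‖f n‖) (U : Filter ℕ) (nhds 0)}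
  zero_mem' := by
    simp [lp.coeFn_zero]
  add_mem' := by
    intro f g hf hg
    have h : Tendsto (fun n => ‖f n‖ + ‖g n‖) (U : Filter ℕ) (nhds 0) := by
      simpa using hf.add hg
    refine squeeze_zero (fun n => norm_nonneg _) (fun n => ?_) h
    calc ‖(f + g) n‖ = ‖f n + g n‖ := by rw [lp.coeFn_add]; rfl
    _ ≤ ‖f n‖ + ‖g n‖ := norm_add_le _ _
  smul_mem' := by
    intro c f hf
    have h : Tendsto (fun n => ‖c‖ * ‖f n‖) (U : Filter ℕ) (nhds (‖c‖ * 0)) := hf.const_mul _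
    have heq : (fun n => ‖(c • f) n‖) = fun n => ‖c‖ * ‖f n‖ := by
      funext n
      rw [lp.coeFn_smul]
      simp [norm_smul]
    rw [Set.mem_setOf_eq, heq]
    simpa using h

/-- The ultrapower `X^U = ℓ_∞(X) / N_U`. -/
abbrev BWUltrapower (X : Type*) [NormedAddCommGroup X] [NormedSpace ℝ X] (U : Ultrafilter ℕ) :=
  lp (fun _ : ℕ => X) ⊤ ⧸ BWNull X U

/-- The diagonal embedding `X → X^U`, `x ↦ (x, x, x, …)_U`. -/
noncomputable def BWdiag (U : Ultrafilter ℕ) (x : X) : BWUltrapower X U :=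
  Submodule.Quotient.mk
    (⟨fun _ => x, memℓp_infty ⟨‖x‖, by rintro r ⟨n, rfl⟩; exact le_rfl⟩⟩ :
      lp (fun _ : ℕ => X) ⊤)


section BWAux

open NormedSpace

variable {X : Type*} [NormedAddCommGroup X] [NormedSpace ℝ X]
variable (U : Ultrafilter ℕ)

/-- Ultrafilter limit of `φ (f n)`. -/
noncomputable def BWlim (f : lp (fun _ : ℕ => X) ⊤) (φ : StrongDual ℝ X) : ℝ :=
  limUnder (U : Filter ℕ) (fun n => φ (f n))

lemma BWlim_ex (f : lp (fun _ : ℕ => X) ⊤) (φ : StrongDual ℝ X) :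
    ∃ a : ℝ, Tendsto (fun n => φ (f n)) (U : Filter ℕ) (nhds a) := by
  set M : ℝ := ‖φ‖ * ‖f‖
  have hmem : ∀ n, φ (f n) ∈ Set.Icc (-M) M := by
    intro n
    have h1 : ‖φ (f n)‖ ≤ M :=
      (φ.le_opNorm (f n)).trans
        (mul_le_mul_of_nonneg_left (lp.norm_apply_le_norm ENNReal.top_ne_zero f n)
          (norm_nonneg φ))
    rw [Real.norm_eq_abs, abs_le] at h1
    exact ⟨h1.1, h1.2⟩
  have hle : (Ultrafilter.map (fun n => φ (f n)) U : Filter ℝ) ≤ 𝓟 (Set.Icc (-M) M) := by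
    rw [Ultrafilter.coe_map, Filter.le_principal_iff, Filter.mem_map]
    exact Filter.univ_mem' fun n => hmem n
  obtain ⟨a, -, ha⟩ := (isCompact_Icc (a := -M) (b := M)).ultrafilter_le_nhds
    (Ultrafilter.map (fun n => φ (f n)) U) hle
  rw [Ultrafilter.coe_map] at ha
  exact ⟨a, ha⟩

lemma BWlim_tendsto (f : lp (fun _ : ℕ => X) ⊤) (φ : StrongDual ℝ X) :
    Tendsto (fun n => φ (f n)) (U : Filter ℕ) (nhds (BWlim U f φ)) :=
  tendsto_nhds_limUnder (BWlim_ex U f φ)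

lemma BWlim_unique {f : lp (fun _ : ℕ => X) ⊤} {φ : StrongDual ℝ X} {a : ℝ}
    (ha : Tendsto (fun n => φ (f n)) (U : Filter ℕ) (nhds a)) : BWlim U f φ = a :=
  tendsto_nhds_unique (BWlim_tendsto U f φ) ha

/-- Weak-* limit along `U` as an element of the bidual. -/
noncomputable def BWT (f : lp (fun _ : ℕ => X) ⊤) : StrongDual ℝ (StrongDual ℝ X) :=
  LinearMap.mkContinuous
    { toFun := fun φ => BWlim U f φ
      map_add' := fun φ ψ => BWlim_unique U <| by
        have := (BWlim_tendsto U f φ).add (BWlim_tendsto U f ψ)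
        simpa using this
      map_smul' := fun c φ => BWlim_unique U <| by
        have := (BWlim_tendsto U f φ).const_mul c
        simpa [smul_eq_mul] using this }
    ‖f‖
    (by
      intro φ
      have h1 : Tendsto (fun n => ‖φ (f n)‖) (U : Filter ℕ) (nhds ‖BWlim U f φ‖) :=
        (BWlim_tendsto U f φ).norm
      have h2 : ∀ n, ‖φ (f n)‖ ≤ ‖f‖ * ‖φ‖ := fun n => by
        have := (φ.le_opNorm (f n)).trans
          (mul_le_mul_of_nonneg_left (lp.norm_apply_le_norm ENNReal.top_ne_zero f n)
            (norm_nonneg φ))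
        linarith [this, mul_comm ‖φ‖ ‖f‖]
      exact le_of_tendsto h1 (Filter.univ_mem' h2))

lemma BWT_apply (f : lp (fun _ : ℕ => X) ⊤) (φ : StrongDual ℝ X) : BWT U f φ = BWlim U f φ := rfl

lemma BWT_norm_le (f : lp (fun _ : ℕ => X) ⊤) : ‖BWT U f‖ ≤ ‖f‖ :=
  LinearMap.mkContinuous_norm_le _ (norm_nonneg f) _

lemma BWT_add (f g : lp (fun _ : ℕ => X) ⊤) : BWT U (f + g) = BWT U f + BWT U g := by
  ext φ
  rw [ContinuousLinearMap.add_apply, BWT_apply, BWT_apply, BWT_apply]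
  refine BWlim_unique U ?_
  have h := (BWlim_tendsto U f φ).add (BWlim_tendsto U g φ)
  refine h.congr fun n => ?_
  have : (f + g) n = f n + g n := by rw [lp.coeFn_add]; rfl
  rw [this, map_add]

lemma BWT_smul (c : ℝ) (f : lp (fun _ : ℕ => X) ⊤) : BWT U (c • f) = c • BWT U f := by
  ext φ
  rw [ContinuousLinearMap.smul_apply, BWT_apply, BWT_apply]
  refine BWlim_unique U ?_
  have h := (BWlim_tendsto U f φ).const_mul c
  refine (h.congr fun n => ?_)
  have : (c • f) n = c • f n := by rw [lp.coeFn_smul]; rfl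
  rw [this, map_smul]
  simp [smul_eq_mul]

lemma BWT_null {f : lp (fun _ : ℕ => X) ⊤}
    (hf : Tendsto (fun n => ‖f n‖) (U : Filter ℕ) (nhds 0)) : BWT U f = 0 := by
  ext φ
  rw [BWT_apply, ContinuousLinearMap.zero_apply]
  refine BWlim_unique U ?_
  refine squeeze_zero_norm (fun n => φ.le_opNorm (f n)) ?_
  simpa using hf.const_mul ‖φ‖

/-- The constant (diagonal) sequence in `ℓ_∞(X)`. -/
noncomputable def BWconst (x : X) : lp (fun _ : ℕ => X) ⊤ :=
  ⟨fun _ => x, memℓp_infty ⟨‖x‖, by rintro r ⟨n, rfl⟩; exact le_rfl⟩⟩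

lemma BWT_const (x : X) : BWT U (BWconst x) = inclusionInDoubleDual ℝ X x := by
  ext φ
  rw [BWT_apply, NormedSpace.dual_def]
  exact BWlim_unique U tendsto_const_nhds

lemma BWconst_add (x y : X) : BWconst (x + y) = (BWconst x : lp (fun _ : ℕ => X) ⊤) + BWconst y := by
  apply lp.ext
  rw [lp.coeFn_add]
  rfl

lemma BWconst_smul (c : ℝ) (x : X) : BWconst (c • x) = c • (BWconst x : lp (fun _ : ℕ => X) ⊤) := by
  apply lp.ext
  rw [lp.coeFn_smul]
  rfl

lemma BWconst_norm_le (x : X) : ‖(BWconst x : lp (fun _ : ℕ => X) ⊤)‖ ≤ ‖x‖ :=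
  lp.norm_le_of_forall_le (norm_nonneg x) (fun _ => le_rfl)

lemma BWdiag_eq (x : X) : BWdiag U x = Submodule.Quotient.mk (BWconst x) := rfl

/-- The diagonal embedding as a continuous linear map. -/
noncomputable def BWdiagL : X →L[ℝ] BWUltrapower X U :=
  LinearMap.mkContinuous
    { toFun := fun x => BWdiag U x
      map_add' := fun x y => by
        show BWdiag U (x + y) = BWdiag U x + BWdiag U y
        rw [BWdiag_eq, BWdiag_eq, BWdiag_eq, BWconst_add, Submodule.Quotient.mk_add]
      map_smul' := fun c x => by
        show BWdiag U (c • x) = c • BWdiag U x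
        rw [BWdiag_eq, BWdiag_eq, BWconst_smul, Submodule.Quotient.mk_smul] }
    1
    (fun x => by
      rw [one_mul]
      exact (Submodule.Quotient.norm_mk_le _ _).trans (BWconst_norm_le x))

lemma BWdiagL_apply (x : X) : BWdiagL U x = BWdiag U x := rfl

end BWAux

lemma BWbound_aux {E : Type*} [NormedAddCommGroup E] [NormedSpace ℝ E] (f : E → E)
    (hadd : ∀ x y, f (x + y) = f x + f y) (hsmul : ∀ (c : ℝ) x, f (c • x) = c • f x)
    (hf : Continuous f) : ∃ C, 0 < C ∧ ∀ x, ‖f x‖ ≤ C * ‖x‖ :=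
  SemilinearMapClass.bound_of_continuous
    ({ toFun := f, map_add' := hadd, map_smul' := hsmul } : E →ₗ[ℝ] E) hf

set_option maxHeartbeats 1000000 in
/-- If the canonical image of `X` in `X**` is complemented, then for any free ultrafilter `U`
on `ℕ` the canonical (diagonal) copy of `X` in the ultrapower `X^U` is complemented. -/
theorem stmt14 [CompleteSpace X] (U : Ultrafilter ℕ) (hU : (U : Filter ℕ) ≤ Filter.cofinite)
    (h : ∃ Q : StrongDual ℝ (StrongDual ℝ X) →L[ℝ]
        StrongDual ℝ (StrongDual ℝ X),
      Q.comp Q = Q ∧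
        Set.range Q = Set.range (NormedSpace.inclusionInDoubleDual ℝ X)) :
    ∃ P : BWUltrapower X U →L[ℝ] BWUltrapower X U, P.comp P = P ∧
      Set.range P = Set.range (BWdiag (X := X) U) := by
  classical
  obtain ⟨Q, hQQ, hQr⟩ := h
  obtain ⟨C, hC0, hC⟩ : ∃ C, 0 < C ∧ ∀ x : StrongDual ℝ (StrongDual ℝ X), ‖Q x‖ ≤ C * ‖x‖ :=
    BWbound_aux (fun φ => Q φ) (fun x y => Q.map_add x y) (fun c x => Q.map_smul c x) Q.continuous
  set q : X →L[ℝ] StrongDual ℝ (StrongDual ℝ X) :=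
    NormedSpace.inclusionInDoubleDual ℝ X with hq
  have hqinj : Function.Injective q := (NormedSpace.inclusionInDoubleDualLi ℝ (E := X)).injective
  -- Q fixes the range of q
  have hQfix : ∀ x : X, Q (q x) = q x := by
    intro x
    have hx : q x ∈ Set.range Q := by rw [hQr]; exact ⟨x, rfl⟩
    obtain ⟨y, hy⟩ := hx
    rw [← hy]
    calc Q (Q y) = Q.comp Q y := rfl
      _ = Q y := by rw [hQQ]
  -- the pullback of Q ∘ BWT through q
  have hmem : ∀ f : lp (fun _ : ℕ => X) ⊤, ∃ x : X, q x = Q (BWT U f) := by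
    intro f
    have : Q (BWT U f) ∈ Set.range (NormedSpace.inclusionInDoubleDual ℝ X) := by
      rw [← hQr]; exact ⟨BWT U f, rfl⟩
    obtain ⟨x, hx⟩ := this
    exact ⟨x, hx⟩
  set S0 : lp (fun _ : ℕ => X) ⊤ → X := fun f => (hmem f).choose with hS0def
  have hS0 : ∀ f, q (S0 f) = Q (BWT U f) := fun f => (hmem f).choose_spec
  have hS0add : ∀ f g, S0 (f + g) = S0 f + S0 g := by
    intro f g
    apply hqinj
    rw [map_add, hS0, hS0, hS0, BWT_add, map_add]
  have hS0smul : ∀ (c : ℝ) f, S0 (c • f) = c • S0 f := by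
    intro c f
    apply hqinj
    rw [map_smul, hS0, hS0, BWT_smul, map_smul]
  have hS0const : ∀ x : X, S0 (BWconst x) = x := by
    intro x
    apply hqinj
    rw [hS0, BWT_const, ← hq, hQfix]
  have hS0norm : ∀ f, ‖S0 f‖ ≤ C * ‖f‖ := by
    intro f
    have h1 : ‖q (S0 f)‖ = ‖S0 f‖ := (NormedSpace.inclusionInDoubleDualLi ℝ (E := X)).norm_map (S0 f)
    rw [← h1, hS0]
    calc ‖Q (BWT U f)‖ ≤ C * ‖BWT U f‖ := hC _
      _ ≤ C * ‖f‖ := mul_le_mul_of_nonneg_left (BWT_norm_le U f) (hC0.le)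
  have hS0null : ∀ f ∈ BWNull X U, S0 f = 0 := by
    intro f hf
    apply hqinj
    rw [hS0, BWT_null U hf, map_zero, map_zero]
  set Slin : lp (fun _ : ℕ => X) ⊤ →ₗ[ℝ] X :=
    { toFun := S0, map_add' := hS0add, map_smul' := hS0smul } with hSlin
  -- descend to the quotient
  have hker : BWNull X U ≤ LinearMap.ker Slin := fun f hf => by
    simpa [hSlin, LinearMap.mem_ker] using hS0null f hf
  set Sbar0 : BWUltrapower X U →ₗ[ℝ] X := (BWNull X U).liftQ Slin hker with hSbar0
  have hSbar0mk : ∀ f, Sbar0 (Submodule.Quotient.mk f) = S0 f := fun f => rfl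
  have hSbarbound : ∀ z : BWUltrapower X U, ‖Sbar0 z‖ ≤ C * ‖z‖ := by
    intro z
    refine le_of_forall_pos_le_add fun ε hε => ?_
    have hε' : 0 < ε / (C + 1) := div_pos hε (by linarith)
    obtain ⟨m, rfl, hm⟩ := Submodule.Quotient.norm_mk_lt z hε'
    calc ‖Sbar0 (Submodule.Quotient.mk m)‖ = ‖S0 m‖ := by rw [hSbar0mk]
      _ ≤ C * ‖m‖ := hS0norm m
      _ ≤ C * (‖(Submodule.Quotient.mk m : BWUltrapower X U)‖ + ε / (C + 1)) :=
          mul_le_mul_of_nonneg_left hm.le (hC0.le)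
      _ ≤ C * ‖(Submodule.Quotient.mk m : BWUltrapower X U)‖ + ε := by
          have h1 : C * (ε / (C + 1)) ≤ ε := by
            rw [mul_div_assoc']
            rw [div_le_iff₀ (by linarith)]
            nlinarith [hC0.le, hε.le]
          nlinarith [norm_nonneg (Submodule.Quotient.mk m : BWUltrapower X U)]
  set Sbar : BWUltrapower X U →L[ℝ] X := Sbar0.mkContinuous C hSbarbound with hSbarc
  have hSbarmk : ∀ f, Sbar (Submodule.Quotient.mk f) = S0 f := fun f => rfl
  have hkey : ∀ x : X, Sbar (BWdiag U x) = x := by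
    intro x
    rw [BWdiag_eq, hSbarmk, hS0const]
  refine ⟨(BWdiagL U).comp Sbar, ?_, ?_⟩
  · ext z
    simp only [ContinuousLinearMap.comp_apply, BWdiagL_apply]
    rw [hkey]
  · apply Set.eq_of_subset_of_subset
    · rintro y ⟨z, rfl⟩
      exact ⟨Sbar z, rfl⟩
    · rintro y ⟨x, rfl⟩
      exact ⟨BWdiag U x, by simp only [ContinuousLinearMap.comp_apply, BWdiagL_apply, hkey]⟩
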